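/- Let m ∈ ℕ and let D := {z ∈ ℂ⁻ : |z| < 1/exp_m(1)}. Then: (i) for every z ∈ D and every j ∈ {0,…,m}, log^{[j]}(−log z) ∈ ℂ⁻; (ii) for every z ∈ D with z a positive real number, log^{[m]}(−log z) is a positive real number; (iii) the map z ↦ log^{[m]}(−log z) is holomorphic on D. (Remark 5.71 of the paper.) -/

import Mathlib

/-- The `j`-fold iterate `log^{[j]}` of the principal complex logarithm. -/
noncomputable def logIter : ℕ → ℂ → ℂ
  | 0, w => w
  | j + 1, w => Complex.log (logIter j w)

/-- The `j`-fold iterated real exponential `exp_j`. -/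
noncomputable def expIter : ℕ → ℝ → ℝ
  | 0, x => x
  | j + 1, x => Real.exp (expIter j x)

lemma expIter_one_le (k : ℕ) : 1 ≤ expIter k 1 := by
  induction k with
  | zero => simp [expIter]
  | succ k ih => exact Real.one_le_exp (by linarith)

lemma key (m : ℕ) (z : ℂ) (hz : z ∈ Complex.slitPlane)
    (habs : ‖z‖ < 1 / expIter m 1) :
    ∀ j, j ≤ m → Real.log (expIter (m - j) 1) < (logIter j (-Complex.log z)).re := by
  intro j
  induction j with
  | zero =>
    intro _
    have hz0 : z ≠ 0 := Complex.slitPlane_ne_zero hz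
    have habs0 : 0 < ‖z‖ := norm_pos_iff.mpr hz0
    have h := Real.log_lt_log habs0 habs
    rw [one_div, Real.log_inv] at h
    simp only [logIter, Complex.neg_re, Complex.log_re, Nat.sub_zero]
    linarith
  | succ j ih =>
    intro hj
    have h1 := ih (by omega)
    have hm : m - j = (m - (j+1)) + 1 := by omega
    rw [hm] at h1
    have h2 : Real.log (expIter (m - (j+1) + 1) 1) = expIter (m - (j+1)) 1 :=
      Real.log_exp _
    rw [h2] at h1
    have hpos : (0:ℝ) < expIter (m - (j+1)) 1 :=
      lt_of_lt_of_le one_pos (expIter_one_le _)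
    have hre : 0 < (logIter j (-Complex.log z)).re := lt_trans hpos h1
    show Real.log (expIter (m - (j+1)) 1) < (Complex.log (logIter j (-Complex.log z))).re
    rw [Complex.log_re]
    calc Real.log (expIter (m - (j+1)) 1)
        < Real.log ((logIter j (-Complex.log z)).re) := Real.log_lt_log hpos h1
      _ ≤ Real.log (‖logIter j (-Complex.log z)‖) :=
        Real.log_le_log (by linarith) (Complex.re_le_norm _)

lemma keyReal (m : ℕ) (x : ℝ) (hx : 0 < x) (habs : x < 1 / expIter m 1) :
    ∀ j, j ≤ m → ∃ y : ℝ, Real.log (expIter (m - j) 1) < y ∧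
      logIter j (-Complex.log (x : ℂ)) = (y : ℂ) := by
  intro j
  induction j with
  | zero =>
    intro _
    refine ⟨-Real.log x, ?_, ?_⟩
    · have h := Real.log_lt_log hx habs
      rw [one_div, Real.log_inv] at h
      simpa using by linarith
    · simp [logIter, ← Complex.ofReal_log hx.le]
  | succ j ih =>
    intro hj
    obtain ⟨y, hy1, hy2⟩ := ih (by omega)
    have hm : m - j = (m - (j+1)) + 1 := by omega
    have h2 : Real.log (expIter (m - (j+1) + 1) 1) = expIter (m - (j+1)) 1 :=
      Real.log_exp _
    rw [hm, h2] at hy1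
    have hpos : (0:ℝ) < expIter (m - (j+1)) 1 :=
      lt_of_lt_of_le one_pos (expIter_one_le _)
    have hypos : 0 < y := lt_trans hpos hy1
    refine ⟨Real.log y, Real.log_lt_log hpos hy1, ?_⟩
    show Complex.log (logIter j (-Complex.log (x:ℂ))) = _
    rw [hy2, ← Complex.ofReal_log hypos.le]

/-- **Remark 5.71**: let `m ∈ ℕ` and `D := {z ∈ ℂ⁻ : |z| < 1 / exp_m 1}` (where
`ℂ⁻ = ℂ ∖ ℝ_{≤0}` is the slit plane). Then (i) for every `z ∈ D` and every
`j ∈ {0,…,m}`, `log^{[j]} (-log z) ∈ ℂ⁻`; (ii) for every positive real `z ∈ D`,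
`log^{[m]} (-log z)` is a positive real; (iii) `z ↦ log^{[m]} (-log z)` is
holomorphic on `D`. -/
theorem logIter_neg_log_mem_slitPlane (m : ℕ) :
    (∀ z ∈ {w : ℂ | w ∈ Complex.slitPlane ∧ ‖w‖ < 1 / expIter m 1},
      ∀ j ≤ m, logIter j (-Complex.log z) ∈ Complex.slitPlane) ∧
    (∀ x : ℝ, 0 < x →
      ((x : ℂ)) ∈ {w : ℂ | w ∈ Complex.slitPlane ∧ ‖w‖ < 1 / expIter m 1} →
      ∃ y : ℝ, 0 < y ∧ logIter m (-Complex.log (x : ℂ)) = (y : ℂ)) ∧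
    DifferentiableOn ℂ (fun z => logIter m (-Complex.log z))
      {w : ℂ | w ∈ Complex.slitPlane ∧ ‖w‖ < 1 / expIter m 1} := by
  refine ⟨?_, ?_, ?_⟩
  · intro z hz j hj
    have h := key m z hz.1 hz.2 j hj
    have hlog : (0:ℝ) ≤ Real.log (expIter (m - j) 1) :=
      Real.log_nonneg (expIter_one_le _)
    exact Complex.mem_slitPlane_iff.2 (Or.inl (by linarith))
  · intro x hx hmem
    have hx' : x < 1 / expIter m 1 := by
      have := hmem.2
      rwa [Complex.norm_real, Real.norm_eq_abs, abs_of_pos hx] at this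
    obtain ⟨y, hy1, hy2⟩ := keyReal m x hx hx' m le_rfl
    have hlog : (0:ℝ) ≤ Real.log (expIter (m - m) 1) :=
      Real.log_nonneg (expIter_one_le _)
    exact ⟨y, by linarith, hy2⟩
  · have : ∀ j ≤ m, DifferentiableOn ℂ (fun z => logIter j (-Complex.log z))
        {w : ℂ | w ∈ Complex.slitPlane ∧ ‖w‖ < 1 / expIter m 1} := by
      intro j
      induction j with
      | zero =>
        intro _
        exact (differentiableOn_id.clog (fun w hw => hw.1)).neg
      | succ j ih =>
        intro hj
        refine (ih (by omega)).clog ?_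
        intro z hz
        have h := key m z hz.1 hz.2 j (by omega)
        have hlog : (0:ℝ) ≤ Real.log (expIter (m - j) 1) :=
          Real.log_nonneg (expIter_one_le _)
        exact Complex.mem_slitPlane_iff.2 (Or.inl (by linarith))
    exact this m le_rfl
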